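/- For any two positive integers n and m and any primitive Dirichlet character χ* modulo c*, one has ∑_{ℓd = n} χ*(d) · g(χ*, ℓc*, m) = τ(χ*) · conj(χ*)(m/n) · n if n divides m, and ∑_{ℓd = n} χ*(d) · g(χ*, ℓc*, m) = 0 otherwise; here the sum runs over all factorizations n = ℓd into positive integers. -/

import Mathlib

open scoped BigOperators
open Finset

noncomputable def eC (x : ℝ) : ℂ := Complex.exp (2 * Real.pi * Complex.I * x)

/-- Gauss sum of the character modulo `c` induced by `χs` (defined modulo `cs`, with `cs ∣ c`). -/
noncomputable def gSum {cs : ℕ} (χs : DirichletCharacter ℂ cs) (c : ℕ) (m : ℤ) : ℂ :=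
  ∑ u ∈ (Finset.range c).filter fun u => Nat.Coprime u c,
    χs ((u : ℕ) : ZMod cs) * eC ((m : ℝ) * (u : ℝ) / (c : ℝ))

lemma eC_add (x y : ℝ) : eC (x + y) = eC x * eC y := by
  rw [eC, eC, eC, ← Complex.exp_add]
  push_cast
  ring_nf

lemma chi_eq_zero {cs : ℕ} [NeZero cs] (χs : DirichletCharacter ℂ cs) {u : ℕ}
    (h : ¬ Nat.Coprime u cs) : χs ((u : ℕ) : ZMod cs) = 0 := by
  refine χs.map_nonunit ?_
  rwa [ZMod.isUnit_iff_coprime]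

lemma step1 {cs : ℕ} [NeZero cs] (χs : DirichletCharacter ℂ cs) (n : ℕ) (hn : 0 < n) (m : ℤ) :
    ∑ d ∈ n.divisors, χs ((d : ℕ) : ZMod cs) * gSum χs (n / d * cs) m
      = ∑ v ∈ Finset.range (n * cs), χs ((v : ℕ) : ZMod cs) *
          eC ((m : ℝ) * (v : ℝ) / ((n : ℝ) * (cs : ℝ))) := by
  have hcs : 0 < cs := Nat.pos_of_ne_zero (NeZero.ne cs)
  -- restrict RHS to v coprime to cs
  rw [← Finset.sum_filter_of_ne (s := Finset.range (n * cs))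
      (p := fun v => Nat.Coprime v cs) (fun v _ hv => by
        by_contra h
        exact hv (by rw [chi_eq_zero χs h, zero_mul]))]
  -- restrict LHS to d coprime to cs
  rw [← Finset.sum_filter_of_ne (s := n.divisors)
      (p := fun d => Nat.Coprime d cs) (fun d _ hd => by
        by_contra h
        exact hd (by rw [chi_eq_zero χs h, zero_mul]))]
  simp only [gSum, Finset.mul_sum]
  rw [Finset.sum_sigma' (Finset.filter (fun d => Nat.Coprime d cs) n.divisors)
    (fun d => (Finset.range (n / d * cs)).filter fun u => Nat.Coprime u (n / d * cs))]
  refine Finset.sum_nbij' (fun x => x.1 * x.2) (fun v => ⟨Nat.gcd v n, v / Nat.gcd v n⟩)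
    ?_ ?_ ?_ ?_ ?_
  · rintro ⟨d, u⟩ hx
    simp only [Finset.mem_sigma, Finset.mem_filter, Nat.mem_divisors, Finset.mem_range] at hx ⊢
    obtain ⟨⟨⟨hdn, -⟩, hdcs⟩, hu, hucop⟩ := hx
    constructor
    · calc d * u < d * (n / d * cs) := by
            have hd0 : 0 < d := Nat.pos_of_dvd_of_pos hdn hn
            exact (Nat.mul_lt_mul_left hd0).mpr hu
        _ = n * cs := by rw [← mul_assoc, Nat.mul_div_cancel' hdn]
    · exact Nat.Coprime.mul hdcs (hucop.coprime_dvd_right (dvd_mul_left cs _))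
  · intro v hv
    simp only [Finset.mem_filter, Finset.mem_range] at hv
    obtain ⟨hvlt, hvcs⟩ := hv
    have hg : Nat.gcd v n ∣ n := Nat.gcd_dvd_right v n
    have hgv : Nat.gcd v n ∣ v := Nat.gcd_dvd_left v n
    have hg0 : 0 < Nat.gcd v n := Nat.gcd_pos_of_pos_right v hn
    simp only [Finset.mem_sigma, Finset.mem_filter, Nat.mem_divisors, Finset.mem_range]
    refine ⟨⟨⟨hg, hn.ne'⟩, hvcs.coprime_dvd_left hgv⟩, ?_, ?_⟩
    · rw [Nat.div_lt_iff_lt_mul hg0, mul_assoc, mul_comm cs, ← mul_assoc,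
        Nat.div_mul_cancel hg]
      exact hvlt
    · refine Nat.Coprime.mul_right (Nat.coprime_div_gcd_div_gcd hg0) ?_
      exact hvcs.coprime_dvd_left (Nat.div_dvd_of_dvd hgv)
  · rintro ⟨d, u⟩ hx
    simp only [Finset.mem_sigma, Finset.mem_filter, Nat.mem_divisors, Finset.mem_range] at hx
    obtain ⟨⟨⟨hdn, -⟩, hdcs⟩, hu, hucop⟩ := hx
    have hd0 : 0 < d := Nat.pos_of_dvd_of_pos hdn hn
    have hgcd : Nat.gcd (d * u) n = d := by
      conv_lhs => rw [← Nat.mul_div_cancel' hdn]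
      rw [Nat.gcd_mul_left]
      have : Nat.Coprime u (n / d) := hucop.coprime_dvd_right (dvd_mul_right _ _)
      rw [Nat.Coprime.gcd_eq_one this, mul_one]
    simp only [hgcd, Nat.mul_div_cancel_left u hd0]
  · intro v hv
    simp only [Finset.mem_filter, Finset.mem_range] at hv
    exact Nat.mul_div_cancel' (Nat.gcd_dvd_left v n)
  · rintro ⟨d, u⟩ hx
    simp only [Finset.mem_sigma, Finset.mem_filter, Nat.mem_divisors, Finset.mem_range] at hx
    obtain ⟨⟨⟨hdn, -⟩, hdcs⟩, hu, hucop⟩ := hx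
    have hd0 : 0 < d := Nat.pos_of_dvd_of_pos hdn hn
    rw [← mul_assoc, ← map_mul, ← Nat.cast_mul]
    congr 2
    have hnd : ((n / d : ℕ) : ℝ) = (n : ℝ) / (d : ℝ) :=
      Nat.cast_div hdn (by exact_mod_cast hd0.ne')
    push_cast [hnd]
    have hd0' : (d : ℝ) ≠ 0 := by exact_mod_cast hd0.ne'
    have hn0' : (n : ℝ) ≠ 0 := by exact_mod_cast hn.ne'
    have hcs0' : (cs : ℝ) ≠ 0 := by exact_mod_cast hcs.ne'
    field_simp

lemma step2 {cs : ℕ} [NeZero cs] (χs : DirichletCharacter ℂ cs) (n : ℕ) (hn : 0 < n) (m : ℤ) :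
    ∑ v ∈ Finset.range (n * cs), χs ((v : ℕ) : ZMod cs) *
        eC ((m : ℝ) * (v : ℝ) / ((n : ℝ) * (cs : ℝ)))
      = (∑ t ∈ Finset.range n, eC ((m : ℝ) * (t : ℝ) / (n : ℝ))) *
        ∑ a ∈ Finset.range cs, χs ((a : ℕ) : ZMod cs) *
          eC ((m : ℝ) * (a : ℝ) / ((n : ℝ) * (cs : ℝ))) := by
  have hcs : 0 < cs := Nat.pos_of_ne_zero (NeZero.ne cs)
  rw [Finset.sum_mul_sum]
  rw [← Finset.sum_product']
  refine Finset.sum_nbij' (fun v => (v / cs, v % cs)) (fun p => cs * p.1 + p.2) ?_ ?_ ?_ ?_ ?_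
  · intro v hv
    simp only [Finset.mem_range, Finset.mem_product] at hv ⊢
    exact ⟨Nat.div_lt_of_lt_mul (by rwa [mul_comm] at hv), Nat.mod_lt _ hcs⟩
  · rintro ⟨t, a⟩ hp
    simp only [Finset.mem_range, Finset.mem_product] at hp ⊢
    obtain ⟨ht, ha⟩ := hp
    calc cs * t + a < cs * t + cs := by omega
      _ = cs * (t + 1) := by ring
      _ ≤ cs * n := Nat.mul_le_mul_left cs ht
      _ = n * cs := mul_comm _ _
  · intro v _
    simp [Nat.div_add_mod]
  · rintro ⟨t, a⟩ hp
    simp only [Finset.mem_range, Finset.mem_product] at hp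
    obtain ⟨ht, ha⟩ := hp
    have h1 : (cs * t + a) / cs = t := by
      rw [Nat.mul_add_div hcs, Nat.div_eq_of_lt ha]; omega
    have h2 : (cs * t + a) % cs = a := by
      rw [Nat.mul_add_mod]; exact Nat.mod_eq_of_lt ha
    simp [h1, h2]
  · intro v hv
    simp only [Finset.mem_range] at hv
    -- value equality
    have hkey : (m : ℝ) * (v : ℝ) / ((n : ℝ) * (cs : ℝ))
        = (m : ℝ) * ((v / cs : ℕ) : ℝ) / (n : ℝ)
          + (m : ℝ) * ((v % cs : ℕ) : ℝ) / ((n : ℝ) * (cs : ℝ)) := by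
      have hv' : (v : ℝ) = cs * ((v / cs : ℕ) : ℝ) + ((v % cs : ℕ) : ℝ) := by
        have := Nat.div_add_mod v cs
        exact_mod_cast this.symm
      rw [hv']
      have hn0 : (n : ℝ) ≠ 0 := by exact_mod_cast hn.ne'
      have hcs0 : (cs : ℝ) ≠ 0 := by exact_mod_cast hcs.ne'
      field_simp
    have hchi : χs ((v : ℕ) : ZMod cs) = χs (((v % cs : ℕ) : ℕ) : ZMod cs) := by
      congr 1
      conv_lhs => rw [← Nat.div_add_mod v cs]
      push_cast
      simp [ZMod.natCast_self]
    rw [hkey, eC_add, hchi]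
    ring

lemma geom_zero (n m : ℕ) (hn : 0 < n) (hnm : ¬ n ∣ m) :
    ∑ t ∈ Finset.range n, eC ((m : ℝ) * (t : ℝ) / (n : ℝ)) = 0 := by
  have hn0 : (n : ℝ) ≠ 0 := by exact_mod_cast hn.ne'
  have hterm : ∀ t : ℕ, eC ((m : ℝ) * (t : ℝ) / (n : ℝ)) = eC ((m : ℝ) / (n : ℝ)) ^ t := by
    intro t
    rw [eC, eC, ← Complex.exp_nat_mul]
    congr 1
    push_cast
    field_simp
  simp only [hterm]
  have hz1 : eC ((m : ℝ) / (n : ℝ)) ≠ 1 := by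
    intro h
    rw [eC, Complex.exp_eq_one_iff] at h
    obtain ⟨k, hk⟩ := h
    have h2pi : (2 * (Real.pi : ℂ) * Complex.I) ≠ 0 := by
      simp [Real.pi_ne_zero, Complex.I_ne_zero]
    rw [mul_comm (k : ℂ)] at hk
    have := mul_left_cancel₀ h2pi hk
    have hreal : (m : ℝ) / (n : ℝ) = (k : ℝ) := by exact_mod_cast this
    apply hnm
    have : (m : ℝ) = (k : ℝ) * (n : ℝ) := by field_simp at hreal; linarith [hreal]
    have hz : (m : ℤ) = k * n := by exact_mod_cast this
    have : (n : ℤ) ∣ (m : ℤ) := ⟨k, by linarith [hz]⟩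
    exact_mod_cast this
  rw [geom_sum_eq hz1]
  have hpow : eC ((m : ℝ) / (n : ℝ)) ^ n = 1 := by
    rw [eC, ← Complex.exp_nat_mul]
    have hnC : (n : ℂ) ≠ 0 := Nat.cast_ne_zero.mpr hn.ne'
    have : (n : ℂ) * (2 * (Real.pi : ℂ) * Complex.I * ((m : ℝ) / (n : ℝ) : ℝ)) =
        (m : ℤ) * (2 * (Real.pi : ℂ) * Complex.I) := by
      push_cast
      field_simp
    rw [this, Complex.exp_int_mul_two_pi_mul_I]
  rw [hpow, sub_self, zero_div]

lemma geom_full (n m : ℕ) (hn : 0 < n) (hnm : n ∣ m) :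
    ∑ t ∈ Finset.range n, eC ((m : ℝ) * (t : ℝ) / (n : ℝ)) = (n : ℂ) := by
  have hn0 : (n : ℝ) ≠ 0 := by exact_mod_cast hn.ne'
  have hterm : ∀ t : ℕ, eC ((m : ℝ) * (t : ℝ) / (n : ℝ)) = 1 := by
    intro t
    obtain ⟨k, rfl⟩ := hnm
    rw [eC]
    have hnC : (n : ℂ) ≠ 0 := Nat.cast_ne_zero.mpr hn.ne'
    have : (2 * (Real.pi : ℂ) * Complex.I * (((n * k : ℕ) : ℝ) * (t : ℝ) / (n : ℝ) : ℝ)) =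
        ((k * t : ℤ) : ℂ) * (2 * (Real.pi : ℂ) * Complex.I) := by
      push_cast
      field_simp
    rw [this, Complex.exp_int_mul_two_pi_mul_I]
  simp [hterm]

lemma gSum_eq_gaussSum {cs : ℕ} [NeZero cs] (χs : DirichletCharacter ℂ cs) (k : ℤ) :
    gSum χs cs k = gaussSum χs ((ZMod.stdAddChar).mulShift ((k : ℤ) : ZMod cs)) := by
  have hcs : 0 < cs := Nat.pos_of_ne_zero (NeZero.ne cs)
  rw [gSum, Finset.sum_filter_of_ne (fun u _ hu => by
    by_contra h
    exact hu (by rw [chi_eq_zero χs h, zero_mul]))]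
  rw [gaussSum]
  refine Finset.sum_nbij' (fun u => ((u : ℕ) : ZMod cs)) (fun a => a.val) ?_ ?_ ?_ ?_ ?_
  · intro u _; exact Finset.mem_univ _
  · intro a _
    simp only [Finset.mem_range]
    exact ZMod.val_lt a
  · intro u hu
    simp only [Finset.mem_range] at hu
    exact ZMod.val_cast_of_lt hu
  · intro a _
    simp [ZMod.natCast_val, ZMod.cast_id]
  · intro u hu
    simp only [Finset.mem_range] at hu
    congr 1
    rw [AddChar.mulShift_apply]
    have : ((k : ℤ) : ZMod cs) * ((u : ℕ) : ZMod cs) = (((k * u : ℤ) : ℤ) : ZMod cs) := by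
      push_cast; ring
    rw [this, ZMod.stdAddChar_coe, eC]
    congr 1
    push_cast
    ring

lemma tau_eq {cs : ℕ} [NeZero cs] (χs : DirichletCharacter ℂ cs) :
    gSum χs cs 1 = gaussSum χs ZMod.stdAddChar := by
  rw [gSum_eq_gaussSum χs 1]
  norm_num [AddChar.mulShift_one]

/-- For positive integers `n`, `m` and a primitive character `χ*` mod `c*`:
`∑_{ℓd = n} χ*(d) g(χ*, ℓc*, m)` equals `τ(χ*) conj(χ*)(m/n) n` if `n ∣ m`, and `0` otherwise. -/
theorem gauss_sum_collapse {cs : ℕ} (hcs : 0 < cs)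
    (χs : DirichletCharacter ℂ cs) (hprim : χs.IsPrimitive)
    (n m : ℕ) (hn : 0 < n) (hm : 0 < m) :
    (n ∣ m →
      ∑ d ∈ n.divisors, χs ((d : ℕ) : ZMod cs) * gSum χs (n / d * cs) (m : ℤ) =
        gSum χs cs 1 * (starRingEnd ℂ) (χs ((m / n : ℕ) : ZMod cs)) * (n : ℂ)) ∧
    (¬ n ∣ m →
      ∑ d ∈ n.divisors, χs ((d : ℕ) : ZMod cs) * gSum χs (n / d * cs) (m : ℤ) = 0) := by
  haveI : NeZero cs := ⟨hcs.ne'⟩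
  have hn0 : (n : ℝ) ≠ 0 := by exact_mod_cast hn.ne'
  have hcs0 : (cs : ℝ) ≠ 0 := by exact_mod_cast hcs.ne'
  have hS : ∑ d ∈ n.divisors, χs ((d : ℕ) : ZMod cs) * gSum χs (n / d * cs) (m : ℤ)
      = (∑ t ∈ Finset.range n, eC ((m : ℝ) * (t : ℝ) / (n : ℝ))) *
        ∑ a ∈ Finset.range cs, χs ((a : ℕ) : ZMod cs) *
          eC ((m : ℝ) * (a : ℝ) / ((n : ℝ) * (cs : ℝ))) := by
    rw [step1 χs n hn (m : ℤ), step2 χs n hn (m : ℤ)]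
    simp only [Int.cast_natCast]
  constructor
  · intro hdvd
    rw [hS, geom_full n m hn hdvd]
    have hmn : ((m / n : ℕ) : ℝ) = (m : ℝ) / (n : ℝ) := Nat.cast_div hdvd hn0
    have hA : ∑ a ∈ Finset.range cs, χs ((a : ℕ) : ZMod cs) *
          eC ((m : ℝ) * (a : ℝ) / ((n : ℝ) * (cs : ℝ)))
        = gSum χs cs ((m / n : ℕ) : ℤ) := by
      rw [gSum, Finset.sum_filter_of_ne (fun u _ hu => by
        by_contra h
        exact hu (by rw [chi_eq_zero χs h, zero_mul]))]
      refine Finset.sum_congr rfl fun a _ => ?_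
      congr 2
      push_cast [hmn]
      field_simp
      rw [← Int.natCast_div, Int.cast_natCast, hmn]
      field_simp
    rw [hA, gSum_eq_gaussSum]
    have hb : (((m / n : ℕ) : ℤ) : ZMod cs) = ((m / n : ℕ) : ZMod cs) := Int.cast_natCast _
    rw [hb, gaussSum_mulShift_of_isPrimitive ZMod.stdAddChar hprim, ← MulChar.star_apply',
      ← starRingEnd_apply, tau_eq]
    ring
  · intro hdvd
    rw [hS, geom_zero n m hn hdvd, zero_mul]
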